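/- arXiv:2505.14042 — 2 statements merged into one kernel-verified Lean document; each statement's English description precedes it below -/
import Mathlib

section
/- Let Y ~ Binomial(N, 1/2) and let 0 < k < N/2 be an integer. Then P[Y ≤ k] ≥ (1/sqrt(8N(k/N)(1-k/N))) · exp(-N · D(k/N || 1/2)), where D(a||b) = a ln(a/b) + (1-a) ln((1-a)/(1-b)) is the binary KL divergence. -/
open MeasureTheory

/-- Binary Kullback–Leibler divergence `D(a‖b) = a ln(a/b) + (1-a) ln((1-a)/(1-b))`. -/
noncomputable def klBin (a b : ℝ) : ℝ :=
  a * Real.log (a / b) + (1 - a) * Real.log ((1 - a) / (1 - b))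

section Aux
open Real Stirling ENNReal


lemma sqrt_pi_le_stirlingSeq (n : ℕ) (hn : 1 ≤ n) : Real.sqrt π ≤ stirlingSeq n := by
  obtain ⟨m, rfl⟩ := Nat.exists_eq_add_of_le hn
  have := stirlingSeq'_antitone.le_of_tendsto
    (tendsto_stirlingSeq_sqrt_pi.comp (Filter.tendsto_add_atTop_nat 1)) m
  simpa [Function.comp, Nat.add_comm] using this

lemma stirlingSeq_two : stirlingSeq 2 = Real.exp 1 ^ 2 / 4 := by
  rw [stirlingSeq]
  have h4 : Real.sqrt (2 * (2:ℕ)) = 2 := by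
    rw [show (2 * (2:ℕ) : ℝ) = 2^2 by norm_num, Real.sqrt_sq (by norm_num)]
  rw [h4]
  have he : Real.exp 1 > 0 := Real.exp_pos 1
  field_simp [Nat.factorial]
  ring

lemma stirlingSeq_le_two (k : ℕ) (hk : 2 ≤ k) : stirlingSeq k ≤ stirlingSeq 2 := by
  obtain ⟨m, rfl⟩ := Nat.exists_eq_add_of_le hk
  have h := stirlingSeq'_antitone (Nat.le_add_right 1 m)
  simp only [Function.comp] at h
  rwa [show 2 + m = (1 + m).succ by omega]

lemma stirling_prod_le (k m : ℕ) (hk : 2 ≤ k) (hm : 2 ≤ m) :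
    stirlingSeq k * stirlingSeq m ≤ 2 * stirlingSeq (k + m) := by
  have h2 : (0:ℝ) < stirlingSeq 2 := stirlingSeq'_pos 1
  have hks : 0 < stirlingSeq k := by
    cases k with | zero => omega | succ a => exact stirlingSeq'_pos a
  have hms : 0 < stirlingSeq m := by
    cases m with | zero => omega | succ a => exact stirlingSeq'_pos a
  calc stirlingSeq k * stirlingSeq m ≤ stirlingSeq 2 * stirlingSeq 2 :=
        mul_le_mul (stirlingSeq_le_two k hk) (stirlingSeq_le_two m hm) hms.le h2.le
    _ ≤ 2 * Real.sqrt π := by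
        rw [stirlingSeq_two]
        have hsp : (1.7724 : ℝ) ≤ Real.sqrt π := by
          rw [Real.le_sqrt (by norm_num)]
          · nlinarith [Real.pi_gt_d6, Real.pi_pos]
          · exact Real.pi_pos.le
        have he : Real.exp 1 ≤ 2.7182818286 := Real.exp_one_lt_d9.le
        have he0 : (0:ℝ) < Real.exp 1 := Real.exp_pos 1
        nlinarith [pow_le_pow_left₀ he0.le he 4]
    _ ≤ 2 * stirlingSeq (k + m) := by
        have := sqrt_pi_le_stirlingSeq (k + m) (by omega); linarith

lemma pow_ineq (m : ℕ) (hm : 2 ≤ m) : ((m:ℝ)+1)^(2*m+1) ≤ 8 * (m:ℝ)^(2*m+1) := by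
  rcases le_or_gt 13 m with h | h
  · have hm0 : (0:ℝ) < m := by exact_mod_cast (by omega : 0 < m)
    have hx : (0:ℝ) < 1 + 1/m := by positivity
    have hlog : Real.log (1 + 1/m) ≤ 1/m := by
      have := Real.log_le_sub_one_of_pos hx; linarith
    have hlognn : 0 ≤ Real.log (1 + 1/m) := Real.log_nonneg (by
      have : (0:ℝ) ≤ 1/m := by positivity
      linarith)
    have hsplit : ((m:ℝ)+1) = m * (1 + 1/m) := by field_simp
    rw [hsplit, mul_pow]
    have hpow : (1 + 1/(m:ℝ))^(2*m+1) ≤ 8 := by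
      have h1 : (1 + 1/(m:ℝ))^(2*m+1) = Real.exp (((2*m+1:ℕ):ℝ) * Real.log (1 + 1/m)) := by
        rw [Real.exp_nat_mul, Real.exp_log hx]
      rw [h1, show (8:ℝ) = Real.exp (Real.log 8) from (Real.exp_log (by norm_num)).symm]
      apply Real.exp_le_exp.2
      have h5 : (2:ℝ) + 1/13 ≤ Real.log 8 := by
        have : Real.log 8 = 3 * Real.log 2 := by
          rw [show (8:ℝ) = 2^3 by norm_num, Real.log_pow]; push_cast; ring
        rw [this]; nlinarith [Real.log_two_gt_d9]
      have h4 : (1:ℝ)/m ≤ 1/13 := by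
        apply div_le_div_of_nonneg_left (by norm_num) (by norm_num)
        exact_mod_cast h
      have h2 : ((2*m+1:ℕ):ℝ) * Real.log (1 + 1/m) ≤ (2*(m:ℝ)+1) * (1/m) := by
        push_cast
        exact mul_le_mul_of_nonneg_left hlog (by positivity)
      have h3 : ((2*(m:ℝ))+1) * (1/m) = 2 + 1/m := by field_simp
      linarith
    calc (m:ℝ)^(2*m+1) * (1+1/m)^(2*m+1) ≤ (m:ℝ)^(2*m+1) * 8 :=
          mul_le_mul_of_nonneg_left hpow (by positivity)
      _ = 8 * (m:ℝ)^(2*m+1) := by ring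
  · interval_cases m <;> norm_num

lemma fact_eq (n : ℕ) (hn : 1 ≤ n) :
    (n.factorial : ℝ) = stirlingSeq n * Real.sqrt (2*n) * ((n:ℝ)/Real.exp 1)^n := by
  have h1 : Real.sqrt (2*(n:ℝ)) ≠ 0 := by positivity
  have h2 : ((n:ℝ)/Real.exp 1)^n ≠ 0 := by
    have : (0:ℝ) < n := by exact_mod_cast hn
    positivity
  rw [stirlingSeq]
  field_simp

lemma choose_eq (k m : ℕ) (hk : 1 ≤ k) (hm : 1 ≤ m) :
    ((k+m).choose k : ℝ) * (k:ℝ)^k * (m:ℝ)^m =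
      (stirlingSeq (k+m) / (stirlingSeq k * stirlingSeq m)) *
      (Real.sqrt (2*(k+m:ℕ)) / (Real.sqrt (2*k) * Real.sqrt (2*m))) * ((k+m:ℕ):ℝ)^(k+m) := by
  have hkN : k ≤ k + m := Nat.le_add_right k m
  have hfac : (k.factorial : ℝ) * m.factorial * (k+m).choose k = (k+m).factorial := by
    have := Nat.choose_mul_factorial_mul_factorial hkN
    rw [show (k+m) - k = m from by omega] at this
    exact_mod_cast by rw [← this]; push_cast; ring
  have hC : ((k+m).choose k : ℝ) = (k+m).factorial / (k.factorial * m.factorial) := by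
    rw [_root_.eq_div_iff (by positivity), ← hfac]; ring
  rw [hC, fact_eq (k+m) (by omega), fact_eq k (by omega), fact_eq m (by omega)]
  have hsk : stirlingSeq k ≠ 0 := by
    cases k with | zero => omega | succ a => exact (stirlingSeq'_pos a).ne'
  have hsm : stirlingSeq m ≠ 0 := by
    cases m with | zero => omega | succ a => exact (stirlingSeq'_pos a).ne'
  have hk0 : (0:ℝ) < k := by exact_mod_cast (by omega : 0 < k)
  have hm0 : (0:ℝ) < m := by exact_mod_cast (by omega : 0 < m)
  have hrk : Real.sqrt (2*(k:ℝ)) ≠ 0 := by positivity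
  have hrm : Real.sqrt (2*(m:ℝ)) ≠ 0 := by positivity
  have he : (0:ℝ) < Real.exp 1 := Real.exp_pos 1
  rw [div_pow, div_pow, div_pow]
  push_cast
  field_simp
  rw [pow_add]
  ring

lemma sqrt_ratio (x y : ℝ) (hx : 0 < x) (hy : 0 < y) :
    Real.sqrt (2*(x+y)) / (Real.sqrt (2*x) * Real.sqrt (2*y)) = 2 * Real.sqrt ((x+y)/(8*x*y)) := by
  have h4 : Real.sqrt 4 = 2 := by
    rw [show (4:ℝ) = 2^2 by norm_num, Real.sqrt_sq (by norm_num)]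
  have h2 : 2 * Real.sqrt ((x+y)/(8*x*y)) = Real.sqrt (4*((x+y)/(8*x*y))) := by
    rw [Real.sqrt_mul (by norm_num) _, h4]
  rw [h2, ← Real.sqrt_mul (by positivity : (0:ℝ) ≤ 2*x) (2*y),
      ← Real.sqrt_div (by positivity : (0:ℝ) ≤ 2*(x+y))]
  congr 1
  field_simp
  ring

lemma sq_le_imp (a b : ℝ) (ha : 0 ≤ a) (hb : 0 ≤ b) (h : a^2 ≤ b^2) : a ≤ b := by nlinarith


lemma key (N k : ℕ) (hk : 0 < k) (hkN : 2*k < N) :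
    Real.sqrt ((N:ℝ)/(8*k*((N-k:ℕ):ℝ))) * (N:ℝ)^N
      ≤ (N.choose k : ℝ) * (k:ℝ)^k * ((N-k:ℕ):ℝ)^(N-k) := by
  obtain ⟨m, rfl⟩ : ∃ m, N = k + m := ⟨N - k, by omega⟩
  have hm2 : 2 ≤ m := by omega
  have hsub : (k + m) - k = m := by omega
  rw [hsub]
  have hk0 : (0:ℝ) < k := by exact_mod_cast hk
  have hm0 : (0:ℝ) < m := by exact_mod_cast (by omega : 0 < m)
  rcases eq_or_lt_of_le (Nat.one_le_iff_ne_zero.2 hk.ne') with h1 | h2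
  · -- k = 1
    have hk1 : k = 1 := h1.symm
    subst hk1
    have hchoose : ((1+m).choose 1 : ℝ) = (m:ℝ) + 1 := by
      rw [Nat.choose_one_right]; push_cast; ring
    rw [hchoose]
    push_cast
    simp only [one_pow, mul_one]
    apply sq_le_imp _ _ (by positivity) (by positivity)
    rw [mul_pow, Real.sq_sqrt (by positivity), mul_pow, ← pow_mul]
    rw [div_mul_eq_mul_div, div_le_iff₀ (by positivity)]
    have P := pow_ineq m hm2
    calc (1+(m:ℝ)) * (1+(m:ℝ))^((1+m)*2)
        = ((m:ℝ)+1)^2 * ((m:ℝ)+1)^(2*m+1) := by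
          rw [show (1+m)*2 = (2*m+1)+1 from by omega, pow_succ]; ring
      _ ≤ ((m:ℝ)+1)^2 * (8 * (m:ℝ)^(2*m+1)) :=
          mul_le_mul_of_nonneg_left P (by positivity)
      _ = ((m:ℝ)+1)^2 * ((m:ℝ)^m)^2 * (8*m) := by
          rw [show 2*m+1 = m*2+1 from by omega, pow_succ (m:ℝ) (m*2), pow_mul (m:ℝ) m 2]; ring
  · -- k ≥ 2
    rw [choose_eq k m (by omega) (by omega)]
    push_cast
    rw [sqrt_ratio (k:ℝ) (m:ℝ) hk0 hm0]
    have hS := sqrt_pi_le_stirlingSeq (k+m) (by omega)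
    have hprod := stirling_prod_le k m h2 hm2
    have hA : 0 < stirlingSeq k := by
      cases k with | zero => omega | succ a => exact stirlingSeq'_pos a
    have hB : 0 < stirlingSeq m := by
      cases m with | zero => omega | succ a => exact stirlingSeq'_pos a
    have hhalf : (1/2 : ℝ) ≤ stirlingSeq (k+m) / (stirlingSeq k * stirlingSeq m) := by
      rw [le_div_iff₀ (by positivity)]
      linarith
    have hsq : 0 ≤ Real.sqrt (((k:ℝ)+m)/(8*k*m)) := Real.sqrt_nonneg _
    have hNN : (0:ℝ) ≤ ((k:ℝ)+m)^(k+m) := by positivity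
    nlinarith [mul_le_mul_of_nonneg_right hhalf (mul_nonneg (mul_nonneg (by norm_num : (0:ℝ) ≤ 2) hsq) hNN)]

lemma step1 (N k : ℕ) (hk : 0 < k) (hkN : 2 * k < N) :
    (((PMF.binomial (1 / 2) (by norm_num) N).toMeasure {y : Fin (N + 1) | (y : ℕ) ≤ k}).toReal
      ≥ (N.choose k : ℝ) * (1/2)^N) := by
  set P := (PMF.binomial (1/2 : NNReal) (by norm_num) N)
  have hklt : k < N + 1 := by omega
  set i : Fin (N+1) := ⟨k, hklt⟩
  have hmono : P.toMeasure {i} ≤ P.toMeasure {y : Fin (N+1) | (y : ℕ) ≤ k} :=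
    measure_mono (by intro y hy; simp at hy; simp [hy, i])
  have hsing : P.toMeasure {i} = P i := PMF.toMeasure_apply_singleton P i (measurableSet_singleton i)
  have hval : P i = (N.choose k : ℝ≥0∞) * (1/2)^N := by
    rw [PMF.binomial_apply]
    rw [show ((1/2 : NNReal) : ℝ≥0∞) = 1/2 by rw [one_div, one_div, ENNReal.coe_inv_two]]
    rw [show ((1:ℝ≥0∞) - 1/2) = 1/2 by rw [one_div, ENNReal.one_sub_inv_two]]
    rw [show (i : ℕ) = k from rfl, show ((Fin.last N : ℕ)) = N from rfl,
      ← pow_add, show k + (N - k) = N from by omega]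
    ring
  have h1 : (P.toMeasure {y : Fin (N+1) | (y : ℕ) ≤ k}).toReal ≥ (P.toMeasure {i}).toReal := by
    apply ENNReal.toReal_mono (measure_ne_top _ _) hmono
  refine le_trans ?_ h1
  rw [hsing, hval]
  rw [ENNReal.toReal_mul, ENNReal.toReal_pow]
  simp [ENNReal.toReal_div]

lemma step2 (N k : ℕ) (hk : 0 < k) (hkN : 2 * k < N) :
    (1 / Real.sqrt (8 * N * ((k : ℝ) / N) * (1 - (k : ℝ) / N)))
          * Real.exp (-(N : ℝ) * klBin ((k : ℝ) / N) (1 / 2))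
      = Real.sqrt ((N:ℝ)/(8*k*((N-k:ℕ):ℝ))) * (N:ℝ)^N
          / (2^N * (k:ℝ)^k * ((N-k:ℕ):ℝ)^(N-k)) := by
  have hkN' : k ≤ N := by omega
  have hNk : ((N-k:ℕ):ℝ) = (N:ℝ) - k := by push_cast [hkN']; ring
  set m := N - k with hm
  have hN0 : (0:ℝ) < N := by exact_mod_cast (by omega : 0 < N)
  have hk0 : (0:ℝ) < k := by exact_mod_cast hk
  have hm0 : (0:ℝ) < m := by
    rw [hNk]; linarith [show 2*(k:ℝ) < N from by exact_mod_cast hkN]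
  have hNsum : k + m = N := by omega
  have h1mp : 1 - (k:ℝ)/N = (m:ℝ)/N := by rw [hNk]; field_simp
  have harg : 8 * (N:ℝ) * ((k:ℝ)/N) * (1 - (k:ℝ)/N) = 8*k*m/N := by
    rw [h1mp]; field_simp
  set a : ℝ := 2*(k:ℝ)/N with ha
  set b : ℝ := 2*(m:ℝ)/N with hb
  have ha0 : 0 < a := by positivity
  have hb0 : 0 < b := by positivity
  have hkl : klBin ((k:ℝ)/N) (1/2) = ((k:ℝ)/N) * Real.log a + ((m:ℝ)/N) * Real.log b := by
    rw [klBin, h1mp]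
    congr 2
    · rw [ha]; field_simp
    · rw [hb]; norm_num; field_simp
  have hNkl : -(N:ℝ) * klBin ((k:ℝ)/N) (1/2) = -((k:ℝ) * Real.log a + (m:ℝ) * Real.log b) := by
    rw [hkl]; field_simp
  have hexp : Real.exp (-(N:ℝ) * klBin ((k:ℝ)/N) (1/2)) = (a^k * b^m)⁻¹ := by
    rw [hNkl, Real.exp_neg, Real.exp_add, Real.exp_nat_mul, Real.exp_nat_mul,
      Real.exp_log ha0, Real.exp_log hb0]
  have hab : a^k * b^m = 2^N * (k:ℝ)^k * (m:ℝ)^m / (N:ℝ)^N := by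
    rw [ha, hb, div_pow, div_pow, mul_pow, mul_pow, ← hNsum]
    rw [pow_add, pow_add]
    field_simp
  rw [harg, hexp, hab]
  rw [one_div, ← Real.sqrt_inv, show ((8*(k:ℝ)*m/N)⁻¹) = (N:ℝ)/(8*k*m) from by rw [inv_div]]
  have h2N : (0:ℝ) < 2^N * (k:ℝ)^k * (m:ℝ)^m := by positivity
  have hNN : (0:ℝ) < (N:ℝ)^N := by positivity
  field_simp

end Aux

/-- Ash's bound: For `Y ~ Binomial(N, 1/2)` and integer `0 < k < N/2`,
`P[Y ≤ k] ≥ (1/sqrt(8N(k/N)(1-k/N))) · exp(-N·D(k/N ‖ 1/2))`. -/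
theorem stmt10 (N k : ℕ) (hk : 0 < k) (hkN : 2 * k < N) :
    (((PMF.binomial (1 / 2) (by norm_num) N).toMeasure {y : Fin (N + 1) | (y : ℕ) ≤ k}).toReal
      ≥ (1 / Real.sqrt (8 * N * ((k : ℝ) / N) * (1 - (k : ℝ) / N)))
          * Real.exp (-(N : ℝ) * klBin ((k : ℝ) / N) (1 / 2))) := by
  refine le_trans ?_ (step1 N k hk hkN)
  rw [step2 N k hk hkN]
  have hkey := key N k hk hkN
  have h2N : (0:ℝ) < 2^N * (k:ℝ)^k * (((N-k:ℕ)):ℝ)^(N-k) := by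
    have : (0:ℝ) < ((N-k:ℕ):ℝ) := by exact_mod_cast (by omega : 0 < N - k)
    have : (0:ℝ) < (k:ℝ) := by exact_mod_cast hk
    positivity
  have hdiv : Real.sqrt ((N:ℝ)/(8*k*((N-k:ℕ):ℝ))) * (N:ℝ)^N
        / (2^N * (k:ℝ)^k * ((N-k:ℕ):ℝ)^(N-k))
      ≤ (N.choose k : ℝ) * (k:ℝ)^k * ((N-k:ℕ):ℝ)^(N-k)
        / (2^N * (k:ℝ)^k * ((N-k:ℕ):ℝ)^(N-k)) := by
    gcongr
  refine le_trans hdiv ?_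
  have hkk : (0:ℝ) < (k:ℝ)^k := by
    have : (0:ℝ) < (k:ℝ) := by exact_mod_cast hk
    positivity
  have hmm : (0:ℝ) < ((N-k:ℕ):ℝ)^(N-k) := by
    have : (0:ℝ) < ((N-k:ℕ):ℝ) := by exact_mod_cast (by omega : 0 < N - k)
    positivity
  have : (N.choose k : ℝ) * (k:ℝ)^k * ((N-k:ℕ):ℝ)^(N-k)
        / (2^N * (k:ℝ)^k * ((N-k:ℕ):ℝ)^(N-k)) = (N.choose k : ℝ) * (1/2)^N := by
    field_simp
    rw [mul_assoc, ← mul_pow]; norm_num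
  exact le_of_eq this
end

section
/- For all real N ≥ 4, (1/sqrt(2(1 - 4/N²))) · exp(-N · D(1/2 - 1/N || 1/2)) > 0.483, where D(a||1/2) = a ln(2a) + (1-a) ln(2(1-a)). -/
lemma log_one_add_le_poly {t : ℝ} (h0 : 0 ≤ t) :
    Real.log (1+t) ≤ t - t^2/2 + t^3/3 - t^4/4 + t^5/5 - t^6/6 + t^7/7 - t^8/8 + t^9/9 := by
  set f : ℝ → ℝ := fun s => (s - s^2/2 + s^3/3 - s^4/4 + s^5/5 - s^6/6 + s^7/7 - s^8/8 + s^9/9)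
      - Real.log (1+s) with hf
  have hder : ∀ s : ℝ, 0 < 1 + s → HasDerivAt f
      ((1 - s + s^2 - s^3 + s^4 - s^5 + s^6 - s^7 + s^8) - 1/(1+s)) s := by
    intro s hs
    have h1 : HasDerivAt (fun u : ℝ => 1 + u) 1 s := by
      simpa using (hasDerivAt_id s).const_add (1:ℝ)
    have hl : HasDerivAt (fun u : ℝ => Real.log (1+u)) (1/(1+s)) s := by
      simpa using h1.log (ne_of_gt hs)
    have hp : HasDerivAt (fun u : ℝ => u - u^2/2 + u^3/3 - u^4/4 + u^5/5 - u^6/6 + u^7/7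
        - u^8/8 + u^9/9) (1 - s + s^2 - s^3 + s^4 - s^5 + s^6 - s^7 + s^8) s := by
      have h := (((((((((hasDerivAt_id s).sub ((hasDerivAt_pow 2 s).div_const 2)).add
        ((hasDerivAt_pow 3 s).div_const 3)).sub ((hasDerivAt_pow 4 s).div_const 4)).add
        ((hasDerivAt_pow 5 s).div_const 5)).sub ((hasDerivAt_pow 6 s).div_const 6)).add
        ((hasDerivAt_pow 7 s).div_const 7)).sub ((hasDerivAt_pow 8 s).div_const 8)).add
        ((hasDerivAt_pow 9 s).div_const 9))
      refine h.congr_deriv ?_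
      push_cast
      ring
    exact hp.sub hl
  have hmono : MonotoneOn f (Set.Ici (0:ℝ)) := by
    apply monotoneOn_of_deriv_nonneg (convex_Ici 0)
    · intro s hs
      have hs' : (0:ℝ) < 1 + s := by simp at hs; linarith
      exact (hder s hs').continuousAt.continuousWithinAt
    · intro s hs
      rw [interior_Ici] at hs
      have hs0 : (0:ℝ) < s := hs
      have hs' : (0:ℝ) < 1 + s := by linarith
      exact (hder s hs').differentiableAt.differentiableWithinAt
    · intro s hs
      rw [interior_Ici] at hs
      have hs0 : (0:ℝ) < s := hs
      have hs' : (0:ℝ) < 1 + s := by linarith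
      rw [(hder s hs').deriv]
      have h9 : 0 ≤ s^9 := by positivity
      rw [sub_nonneg, div_le_iff₀ hs']
      nlinarith
  have h := hmono Set.self_mem_Ici (Set.mem_Ici.mpr h0) h0
  have h0f : f 0 = 0 := by simp [hf]
  rw [h0f] at h
  have hft : f t = (t - t^2/2 + t^3/3 - t^4/4 + t^5/5 - t^6/6 + t^7/7 - t^8/8 + t^9/9)
      - Real.log (1+t) := rfl
  rw [hft] at h
  linarith

lemma log_one_sub_le_poly {t : ℝ} (h0 : 0 ≤ t) (h2 : t ≤ 1/2) :
    Real.log (1-t) ≤ -(t + t^2/2 + t^3/3 + t^4/4 + t^5/5 + t^6/6 + t^7/7 + t^8/8 + t^9/9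
      + t^10/10) := by
  set f : ℝ → ℝ := fun s => -(s + s^2/2 + s^3/3 + s^4/4 + s^5/5 + s^6/6 + s^7/7 + s^8/8 + s^9/9
      + s^10/10) - Real.log (1-s) with hf
  have hder : ∀ s : ℝ, 0 < 1 - s → HasDerivAt f
      (-(1 + s + s^2 + s^3 + s^4 + s^5 + s^6 + s^7 + s^8 + s^9) + 1/(1-s)) s := by
    intro s hs
    have h1 : HasDerivAt (fun u : ℝ => 1 - u) (-1) s := by
      simpa using ((hasDerivAt_id s).const_sub (1:ℝ))
    have hl : HasDerivAt (fun u : ℝ => Real.log (1-u)) (-1/(1-s)) s := by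
      simpa using h1.log (ne_of_gt hs)
    have hp : HasDerivAt (fun u : ℝ => -(u + u^2/2 + u^3/3 + u^4/4 + u^5/5 + u^6/6 + u^7/7
        + u^8/8 + u^9/9 + u^10/10))
        (-(1 + s + s^2 + s^3 + s^4 + s^5 + s^6 + s^7 + s^8 + s^9)) s := by
      have h := ((((((((((hasDerivAt_id s).add ((hasDerivAt_pow 2 s).div_const 2)).add
        ((hasDerivAt_pow 3 s).div_const 3)).add ((hasDerivAt_pow 4 s).div_const 4)).add
        ((hasDerivAt_pow 5 s).div_const 5)).add ((hasDerivAt_pow 6 s).div_const 6)).add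
        ((hasDerivAt_pow 7 s).div_const 7)).add ((hasDerivAt_pow 8 s).div_const 8)).add
        ((hasDerivAt_pow 9 s).div_const 9)).add ((hasDerivAt_pow 10 s).div_const 10)).neg
      refine h.congr_deriv ?_
      push_cast
      ring
    have h := hp.sub hl
    refine h.congr_deriv ?_
    ring
  have hmono : MonotoneOn f (Set.Icc (0:ℝ) (1/2)) := by
    apply monotoneOn_of_deriv_nonneg (convex_Icc 0 (1/2))
    · intro s hs
      have hs' : (0:ℝ) < 1 - s := by
        rcases hs with ⟨_, h⟩; linarith
      exact (hder s hs').continuousAt.continuousWithinAt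
    · intro s hs
      rw [interior_Icc] at hs
      have hs' : (0:ℝ) < 1 - s := by rcases hs with ⟨_, h⟩; linarith
      exact (hder s hs').differentiableAt.differentiableWithinAt
    · intro s hs
      rw [interior_Icc] at hs
      rcases hs with ⟨hs0, hs1⟩
      have hs' : (0:ℝ) < 1 - s := by linarith
      rw [(hder s hs').deriv]
      have key : -(1 + s + s^2 + s^3 + s^4 + s^5 + s^6 + s^7 + s^8 + s^9) + 1/(1-s)
          = s^10/(1-s) := by field_simp; ring
      rw [key]
      positivity
  have h := hmono (Set.mem_Icc.mpr ⟨le_refl 0, by norm_num⟩) (Set.mem_Icc.mpr ⟨h0, h2⟩) h0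
  have h0f : f 0 = 0 := by simp [hf]
  rw [h0f] at h
  have hft : f t = -(t + t^2/2 + t^3/3 + t^4/4 + t^5/5 + t^6/6 + t^7/7 + t^8/8 + t^9/9
      + t^10/10) - Real.log (1-t) := rfl
  rw [hft] at h
  linarith

lemma polyW {t : ℝ} (h0 : 0 ≤ t) (h2 : t ≤ 1/2) :
    0 ≤ 761/1000 - 2*t + t^2 - t^3/3 + t^4/2 - 2*t^5/15 + t^6/3 - t^7/14 + t^8/4
      - 11*t^9/45 - t^10/10 := by
  have hu : 0 ≤ 1/2 - t := by linarith
  nlinarith [mul_nonneg hu h0, mul_nonneg (mul_nonneg hu hu) hu, sq_nonneg (1/2-t),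
    mul_nonneg (mul_nonneg hu hu) (mul_nonneg hu hu),
    pow_nonneg hu 5, pow_nonneg hu 6, pow_nonneg hu 7, pow_nonneg hu 8,
    pow_nonneg hu 9, pow_nonneg hu 10,
    mul_nonneg (pow_nonneg hu 5) h0, mul_nonneg (pow_nonneg hu 7) h0,
    mul_nonneg (pow_nonneg hu 9) h0,
    mul_nonneg (mul_nonneg h0 h0) hu, mul_nonneg (pow_nonneg h0 3) hu,
    mul_nonneg (pow_nonneg h0 4) hu, mul_nonneg (pow_nonneg h0 5) hu,
    mul_nonneg (pow_nonneg h0 6) hu, mul_nonneg (pow_nonneg h0 7) hu,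
    mul_nonneg (pow_nonneg h0 8) hu, mul_nonneg (pow_nonneg h0 9) hu,
    pow_nonneg h0 10]

lemma polyA {t : ℝ} (h0 : 0 ≤ t) (h2 : t ≤ 1/2) :
    (2+3*t)*(t - t^2/2 + t^3/3 - t^4/4 + t^5/5 - t^6/6 + t^7/7 - t^8/8 + t^9/9)
    - (2-t)*(t + t^2/2 + t^3/3 + t^4/4 + t^5/5 + t^6/6 + t^7/7 + t^8/8 + t^9/9 + t^10/10)
    ≤ 0.761 * t := by
  have h := mul_nonneg h0 (polyW h0 h2)
  have e : (2+3*t)*(t - t^2/2 + t^3/3 - t^4/4 + t^5/5 - t^6/6 + t^7/7 - t^8/8 + t^9/9)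
      - (2-t)*(t + t^2/2 + t^3/3 + t^4/4 + t^5/5 + t^6/6 + t^7/7 + t^8/8 + t^9/9 + t^10/10)
      = (761/1000) * t - t * (761/1000 - 2*t + t^2 - t^3/3 + t^4/2 - 2*t^5/15 + t^6/3 - t^7/14
        + t^8/4 - 11*t^9/45 - t^10/10) := by ring
  rw [show (0.761:ℝ) = 761/1000 by norm_num, e]
  linarith

lemma logc_lt : Real.log 0.466578 < -(0.761:ℝ) := by
  have h1 : (0.466578:ℝ) = (2 * (647/625) * (156250000/150937983))⁻¹ := by norm_num
  rw [h1, Real.log_inv, neg_lt_neg_iff]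
  rw [Real.log_mul (by norm_num) (by norm_num), Real.log_mul (by norm_num) (by norm_num)]
  have hlog2 := Real.log_two_gt_d9
  have ha : (1:ℝ) - (647/625:ℝ)⁻¹ ≤ Real.log (647/625) := by
    have := Real.log_le_sub_one_of_pos (show (0:ℝ) < (647/625:ℝ)⁻¹ by norm_num)
    rw [Real.log_inv] at this
    linarith
  have hb : (1:ℝ) - (156250000/150937983:ℝ)⁻¹ ≤ Real.log (156250000/150937983) := by
    have := Real.log_le_sub_one_of_pos
      (show (0:ℝ) < (156250000/150937983:ℝ)⁻¹ by norm_num)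
    rw [Real.log_inv] at this
    linarith
  have e1 : ((647:ℝ)/625)⁻¹ = 625/647 := by norm_num
  have e2 : ((156250000:ℝ)/150937983)⁻¹ = 150937983/156250000 := by norm_num
  rw [e1] at ha
  rw [e2] at hb
  nlinarith [hlog2, ha, hb]

/-- Binary KL divergence with second argument `1/2`:
`D(a ‖ 1/2) = a ln(2a) + (1-a) ln(2(1-a))`. -/
noncomputable def klHalf (a : ℝ) : ℝ :=
  a * Real.log (2 * a) + (1 - a) * Real.log (2 * (1 - a))

/-- For all real `N ≥ 4`,
`(1/sqrt(2(1 - 4/N²))) · exp(-N · D(1/2 - 1/N ‖ 1/2)) > 0.483`. -/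
theorem stmt12 (N : ℝ) (hN : 4 ≤ N) :
    (1 / Real.sqrt (2 * (1 - 4 / N ^ 2))) * Real.exp (-N * klHalf (1 / 2 - 1 / N))
      > 0.483 := by
  have hN0 : (0:ℝ) < N := by linarith
  set t : ℝ := 2 / N with ht
  have ht0 : 0 < t := by positivity
  have ht2 : t ≤ 1/2 := by
    rw [ht, div_le_iff₀ hN0]; linarith
  have h1t : (0:ℝ) < 1 - t := by linarith
  have h1t' : (0:ℝ) < 1 + t := by linarith
  set L₁ : ℝ := Real.log (1 - t) with hL1
  set L₂ : ℝ := Real.log (1 + t) with hL2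
  -- rewrite klHalf
  have hk : klHalf (1/2 - 1/N) = ((1-t) * L₁ + (1+t) * L₂) / 2 := by
    have e1 : 2 * ((1:ℝ)/2 - 1/N) = 1 - t := by rw [ht]; ring
    have e2 : 1 - ((1:ℝ)/2 - 1/N) = (1+t)/2 := by rw [ht]; ring
    have e3 : 2 * (((1:ℝ)+t)/2) = 1 + t := by ring
    rw [klHalf, e1, e2, e3, hL1, hL2]
    have e4 : (1:ℝ)/2 - 1/N = (1-t)/2 := by rw [ht]; ring
    rw [e4]
    ring
  -- the combined log inequality
  have hkey : (2-t)*L₁ + (2+3*t)*L₂ ≤ 0.761 * t := by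
    have b1 := log_one_sub_le_poly ht0.le ht2
    have b2 := log_one_add_le_poly ht0.le
    have c1 : (0:ℝ) < 2 - t := by linarith
    have c2 : (0:ℝ) < 2 + 3*t := by linarith
    have m1 : (2-t)*L₁ ≤ (2-t) * (-(t + t^2/2 + t^3/3 + t^4/4 + t^5/5 + t^6/6 + t^7/7 + t^8/8
        + t^9/9 + t^10/10)) := by
      apply mul_le_mul_of_nonneg_left _ c1.le
      exact b1
    have m2 : (2+3*t)*L₂ ≤ (2+3*t) * (t - t^2/2 + t^3/3 - t^4/4 + t^5/5 - t^6/6 + t^7/7 - t^8/8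
        + t^9/9) := by
      apply mul_le_mul_of_nonneg_left _ c2.le
      exact b2
    have := polyA ht0.le ht2
    nlinarith [m1, m2, this]
  -- numeric constant
  have hc := logc_lt
  -- main squared inequality in log form
  have hE : 2 * (-N * klHalf (1/2 - 1/N)) = -(2/t) * ((1-t) * L₁ + (1+t) * L₂) := by
    rw [hk, ht]
    field_simp
  have hlog : Real.log (0.466578 * ((1-t)*(1+t))) < 2 * (-N * klHalf (1/2 - 1/N)) := by
    rw [hE]
    rw [Real.log_mul (by norm_num) (by positivity), Real.log_mul (ne_of_gt h1t) (ne_of_gt h1t')]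
    rw [← hL1, ← hL2]
    have hS : t * (Real.log 0.466578 + (L₁ + L₂))
        < t * (-(2/t) * ((1-t)*L₁ + (1+t)*L₂)) := by
      have e : t * (-(2/t) * ((1-t)*L₁ + (1+t)*L₂)) = -2*((1-t)*L₁ + (1+t)*L₂) := by
        field_simp
      rw [e]
      have h1 : t * Real.log 0.466578 < -(0.761:ℝ)*t := by
        have := mul_lt_mul_of_pos_left hc ht0
        linarith
      nlinarith [hkey, h1]
    have := (mul_lt_mul_iff_right₀ ht0).mp hS
    linarith
  -- assemble
  have hy : 2*(1 - 4/N^2) = 2*((1-t)*(1+t)) := by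
    rw [ht]; field_simp; ring
  rw [hy]
  have hypos : (0:ℝ) < 2*((1-t)*(1+t)) := by positivity
  have hspos : 0 < Real.sqrt (2*((1-t)*(1+t))) := Real.sqrt_pos.mpr hypos
  rw [gt_iff_lt, show 1/Real.sqrt (2*((1-t)*(1+t))) * Real.exp (-N * klHalf (1/2 - 1/N))
      = Real.exp (-N * klHalf (1/2 - 1/N)) / Real.sqrt (2*((1-t)*(1+t))) by ring,
    lt_div_iff₀ hspos]
  have hsq : (0.483:ℝ) * Real.sqrt (2*((1-t)*(1+t)))
      = Real.sqrt (0.466578 * ((1-t)*(1+t))) := by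
    rw [show (0.466578:ℝ) * ((1-t)*(1+t)) = (0.483)^2 * (2*((1-t)*(1+t))) by ring_nf]
    rw [Real.sqrt_mul (by norm_num : (0:ℝ) ≤ (0.483:ℝ)^2), Real.sqrt_sq (by norm_num)]
  rw [hsq, Real.sqrt_lt' (Real.exp_pos _)]
  have hexp2 : Real.exp (-N * klHalf (1/2 - 1/N)) ^ 2
      = Real.exp (2 * (-N * klHalf (1/2 - 1/N))) := by
    rw [sq, ← Real.exp_add]; ring_nf
  rw [hexp2]
  calc (0.466578:ℝ) * ((1-t)*(1+t))
      = Real.exp (Real.log (0.466578 * ((1-t)*(1+t)))) := by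
        rw [Real.exp_log (by positivity)]
    _ < Real.exp (2 * (-N * klHalf (1/2 - 1/N))) := Real.exp_lt_exp.mpr hlog
end
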